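/- Let t be a nonzerodivisor in a commutative domain R and x₁,…,xₘ, y₁,…,yₘ ∈ R with xᵢyᵢ = t for all i. Define η_{i,j} = (σʸₘ)^{i+j-2} · δ / t^{(i-1)(m-i) + (j-1)(m-j)}, where δ = ∏_{a<b}(x_a − x_b)² is the discriminant of ∏(X − x_a) and σʸₘ = y₁⋯yₘ. Then η_{i,j} = Gᵢ·Gⱼ where Gᵢ is the i-th mixed Vandermonde determinant; in particular η_{i,j} ∈ R (no denominators remain), and η_{i,j} is symmetric in the simultaneous permutation action on the pairs (xₐ, yₐ). -/
import Mathlib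


section aux
variable {R : Type*} [CommRing R]

lemma aux_prod_neg {ι : Type*} (s : Finset ι) (f : ι → R) :
    ∏ i ∈ s, (-f i) = (-1) ^ s.card * ∏ i ∈ s, f i := by
  rw [← Finset.prod_const, ← Finset.prod_mul_distrib]
  exact Finset.prod_congr rfl fun i _ => by ring

lemma aux_sq_vdm {m : ℕ} (u : Fin m → R) :
    (∏ a : Fin m, ∏ b ∈ Finset.Ioi a, (u a - u b)) ^ 2
      = (Matrix.vandermonde u).det ^ 2 := by
  rw [Matrix.det_vandermonde]
  have h1 : ∏ a : Fin m, ∏ b ∈ Finset.Ioi a, (u a - u b)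
      = ∏ a : Fin m, ((-1 : R) ^ (Finset.Ioi a).card * ∏ b ∈ Finset.Ioi a, (u b - u a)) := by
    refine Finset.prod_congr rfl fun a _ => ?_
    rw [← aux_prod_neg]
    exact Finset.prod_congr rfl fun b _ => by ring
  rw [h1, Finset.prod_mul_distrib, mul_pow, Finset.prod_pow_eq_pow_sum, ← pow_mul,
    mul_comm _ 2, pow_mul]
  simp

lemma aux_perm_sq_vdm {m : ℕ} (u : Fin m → R) (g : Equiv.Perm (Fin m)) :
    (∏ a : Fin m, ∏ b ∈ Finset.Ioi a, (u (g a) - u (g b))) ^ 2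
      = (∏ a : Fin m, ∏ b ∈ Finset.Ioi a, (u a - u b)) ^ 2 := by
  have h := aux_sq_vdm (R := R) (u ∘ g)
  simp only [Function.comp_apply] at h
  rw [h, aux_sq_vdm u]
  have h2 : Matrix.vandermonde (u ∘ g) = (Matrix.vandermonde u).submatrix g id := rfl
  rw [h2, Matrix.det_permute]
  rcases Int.units_eq_one_or (Equiv.Perm.sign g) with hs | hs <;> rw [hs] <;> push_cast <;> ring

lemma aux_factor_dvd (t a b : R) (hab : a * b = t) (e p : ℕ) :
    t ^ min e p ∣ b ^ p * a ^ e := by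
  rcases le_total e p with hle | hle
  · obtain ⟨d, rfl⟩ := Nat.exists_eq_add_of_le hle
    rw [min_eq_left (Nat.le_add_right _ _)]
    exact ⟨b ^ d, by rw [← hab]; ring⟩
  · obtain ⟨d, rfl⟩ := Nat.exists_eq_add_of_le hle
    rw [min_eq_right (Nat.le_add_right _ _)]
    exact ⟨a ^ d, by rw [← hab]; ring⟩

lemma aux_dvd {m : ℕ} (t : R) (x y : Fin m → R) (h : ∀ l, x l * y l = t) (p : ℕ) :
    t ^ (∑ c ∈ Finset.range m, min c p) ∣
      (∏ l, y l) ^ p * ∏ a : Fin m, ∏ b ∈ Finset.Ioi a, (x a - x b) := by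
  have hsq : ∏ a : Fin m, ∏ b ∈ Finset.Ioi a, (x a - x b)
      = (∏ a : Fin m, (-1 : R) ^ (Finset.Ioi a).card) * (Matrix.vandermonde x).det := by
    rw [Matrix.det_vandermonde, ← Finset.prod_mul_distrib]
    refine Finset.prod_congr rfl fun a _ => ?_
    rw [← aux_prod_neg]
    exact Finset.prod_congr rfl fun b _ => by ring
  rw [hsq, mul_left_comm]
  apply Dvd.dvd.mul_left
  rw [Matrix.det_apply, Finset.mul_sum]
  refine Finset.dvd_sum fun σ _ => ?_
  rw [mul_smul_comm]
  have key : t ^ (∑ c ∈ Finset.range m, min c p) ∣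
      (∏ l, y l) ^ p * ∏ i : Fin m, Matrix.vandermonde x (σ i) i := by
    have hy : (∏ l, y l) ^ p = ∏ l : Fin m, y (σ l) ^ p := by
      rw [← Finset.prod_pow]
      exact (Equiv.prod_comp σ (fun l => y l ^ p)).symm
    rw [hy, ← Finset.prod_mul_distrib]
    have hexp : (∑ c ∈ Finset.range m, min c p) = ∑ l : Fin m, min (l : ℕ) p := by
      rw [Fin.sum_univ_eq_sum_range (fun c => min c p) m]
    rw [hexp, ← Finset.prod_pow_eq_pow_sum]
    refine Finset.prod_dvd_prod_of_dvd _ _ fun l _ => ?_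
    have := aux_factor_dvd t (x (σ l)) (y (σ l)) (h (σ l)) (l : ℕ) p
    simpa [Matrix.vandermonde] using this
  rcases Int.units_eq_one_or (Equiv.Perm.sign σ) with hs | hs <;> rw [hs] <;>
    simp only [one_smul, Units.neg_smul, dvd_neg] <;> exact key

lemma aux_sum_min (p d : ℕ) :
    2 * ∑ c ∈ Finset.range (p + d), min c p = p * (p - 1) + 2 * d * p := by
  induction d with
  | zero =>
    simp only [Nat.add_zero, Nat.mul_zero, Nat.zero_mul]
    have h1 : ∑ c ∈ Finset.range p, min c p = ∑ c ∈ Finset.range p, c :=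
      Finset.sum_congr rfl fun c hc => min_eq_left (Finset.mem_range.mp hc).le
    rw [h1, mul_comm, Finset.sum_range_id_mul_two]
  | succ d ih =>
    rw [show p + (d + 1) = (p + d) + 1 from rfl, Finset.sum_range_succ,
      min_eq_right (Nat.le_add_right _ _), mul_add, ih]
    ring

lemma aux_exp_eq (m i : ℕ) (hi : 1 ≤ i) (him : i ≤ m) :
    (i - 1) * (2 * m - i) / 2 = ∑ c ∈ Finset.range m, min c (i - 1) := by
  obtain ⟨p, rfl⟩ : ∃ p, i = p + 1 := ⟨i - 1, by omega⟩
  obtain ⟨d, rfl⟩ : ∃ d, m = p + d := ⟨m - p, by omega⟩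
  have h1 : (p + 1 - 1) = p := by omega
  have h2 : 2 * (p + d) - (p + 1) = p + 2 * d - 1 := by omega
  have h5 : p * (p + 2 * d - 1) = 2 * ∑ c ∈ Finset.range (p + d), min c p := by
    rw [aux_sum_min p d]
    cases p with
    | zero => simp
    | succ n =>
      have h3 : n + 1 + 2 * d - 1 = n + 2 * d := by omega
      have h4 : n + 1 - 1 = n := by omega
      rw [h3, h4]; ring
  rw [h1, h2, h5, Nat.mul_div_cancel_left _ (by norm_num)]

end aux


/-- in the fraction field of a domain `R` with `xᵢyᵢ = t ≠ 0`,
`η_{i,j} = (σʸₘ)^{i+j-2} δ / t^{(i-1)(m-i/2)+(j-1)(m-j/2)}` (with `δ` the discriminant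
`∏_{a<b}(x_a − x_b)²`) satisfies `η_{i,j} = Gᵢ Gⱼ`; in particular `η_{i,j}` lies in `R`
(no denominators remain), and `η_{i,j}` is symmetric under simultaneous permutations
of the pairs `(xₐ, yₐ)`. -/
theorem stmt_11 {R : Type*} [CommRing R] [IsDomain R] (m : ℕ) (t : R) (ht : t ≠ 0)
    (x y : Fin m → R) (h : ∀ l, x l * y l = t)
    (K : Type*) [Field K] [Algebra R K] [IsFractionRing R K]
    (G : ℕ → K)
    (hG : ∀ i, G i = algebraMap R K ((∏ l, y l) ^ (i - 1) *
          ∏ a : Fin m, ∏ b ∈ Finset.Ioi a, (x a - x b)) /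
        algebraMap R K t ^ ((i - 1) * (2 * m - i) / 2))
    (δ : R) (hδ : δ = ∏ a : Fin m, ∏ b ∈ Finset.Ioi a, (x a - x b) ^ 2)
    (η : ℕ → ℕ → K)
    (hη : ∀ i j, η i j = algebraMap R K ((∏ l, y l) ^ (i + j - 2) * δ) /
        algebraMap R K t ^ ((i - 1) * (2 * m - i) / 2 + (j - 1) * (2 * m - j) / 2))
    (i j : ℕ) (hi : 1 ≤ i) (him : i ≤ m) (hj : 1 ≤ j) (hjm : j ≤ m) :
    η i j = G i * G j ∧
    (∃ r : R, algebraMap R K r = η i j) ∧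
    (∀ g : Equiv.Perm (Fin m),
      algebraMap R K ((∏ l, y (g l)) ^ (i + j - 2) *
          ∏ a : Fin m, ∏ b ∈ Finset.Ioi a, (x (g a) - x (g b)) ^ 2) /
        algebraMap R K t ^ ((i - 1) * (2 * m - i) / 2 + (j - 1) * (2 * m - j) / 2)
      = η i j) := by
  have hδV : δ = (∏ a : Fin m, ∏ b ∈ Finset.Ioi a, (x a - x b)) ^ 2 := by
    rw [hδ]; simp only [Finset.prod_pow]
  have hnum : (∏ l, y l) ^ (i + j - 2) * δ =
      ((∏ l, y l) ^ (i - 1) * ∏ a : Fin m, ∏ b ∈ Finset.Ioi a, (x a - x b)) *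
      ((∏ l, y l) ^ (j - 1) * ∏ a : Fin m, ∏ b ∈ Finset.Ioi a, (x a - x b)) := by
    rw [hδV, show i + j - 2 = (i - 1) + (j - 1) by omega, pow_add]; ring
  have hEi := aux_exp_eq m i hi him
  have hEj := aux_exp_eq m j hj hjm
  obtain ⟨ri, hri⟩ := aux_dvd t x y h (i - 1)
  obtain ⟨rj, hrj⟩ := aux_dvd t x y h (j - 1)
  have htK : (algebraMap R K) t ≠ 0 := by
    simp [IsFractionRing.to_map_eq_zero_iff, ht]
  refine ⟨?_, ?_, ?_⟩
  · rw [hη, hG i, hG j, div_mul_div_comm, ← map_mul, ← hnum, pow_add]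
  · refine ⟨ri * rj, ?_⟩
    have hn2 : (∏ l, y l) ^ (i + j - 2) * δ =
        t ^ ((i - 1) * (2 * m - i) / 2 + (j - 1) * (2 * m - j) / 2) * (ri * rj) := by
      rw [hnum, hri, hrj, hEi, hEj, pow_add]; ring
    rw [hη i j, hn2, map_mul, map_mul, map_pow, mul_div_cancel_left₀ _ (pow_ne_zero _ htK), map_mul]
  · intro g
    have h1 : ∏ l, y (g l) = ∏ l, y l := Equiv.prod_comp g y
    have h3 : ∏ a : Fin m, ∏ b ∈ Finset.Ioi a, (x (g a) - x (g b)) ^ 2 = δ := by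
      rw [hδ]; simp only [Finset.prod_pow]; exact aux_perm_sq_vdm x g
    rw [h1, h3, ← hη]
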